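/- Let P be a finite set in a metric space, let μ > 0 and m ≥ 1, and suppose P = A_0 ∪ A_1 ∪ ⋯ ∪ A_m where each A_j is μ-separated. Consider the chain relation ~ on P with threshold τ = μ/(m+1). If a, b are points of the ambient metric space and p, q ∈ P satisfy d(a,p) < μ, d(b,q) < μ, and d(a,b) ≥ ((3m+2)/(m+1)) · μ, then p and q are not ~-related (they lie in distinct clusters). (The key nearest-neighbor claim in Case 1 of the proof of Lemma 4.) -/

import Mathlib

open Finset

variable {α : Type*} [MetricSpace α] [DecidableEq α]

/-- A finite set `S` is `μ`-separated if `d(x,y) ≥ μ` for all distinct `x, y ∈ S`. -/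
def Separated (μ : ℝ) (S : Finset α) : Prop :=
  ∀ x ∈ S, ∀ y ∈ S, x ≠ y → μ ≤ dist x y

/-- Max–min diversity of a finite set: the minimum pairwise distance over distinct pairs. -/
noncomputable def divers (S : Finset α) : ℝ :=
  sInf {r : ℝ | ∃ x ∈ S, ∃ y ∈ S, x ≠ y ∧ dist x y = r}

/-- Distance from a point to a (nonempty) finite set: `d(y,S) = min_{s ∈ S} d(y,s)`. -/
noncomputable def setDist (y : α) (S : Finset α) : ℝ :=
  sInf {r : ℝ | ∃ s ∈ S, dist y s = r}

/-- Minimum pairwise distance over distinct pairs of `X`. -/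
noncomputable def dMin (X : Finset α) : ℝ :=
  sInf {r : ℝ | ∃ x ∈ X, ∃ y ∈ X, x ≠ y ∧ dist x y = r}

/-- Maximum pairwise distance over distinct pairs of `X`. -/
noncomputable def dMax (X : Finset α) : ℝ :=
  sSup {r : ℝ | ∃ x ∈ X, ∃ y ∈ X, x ≠ y ∧ dist x y = r}

/-- The geometric grid of guesses `U = { d_min/(1-ε)^j : j ∈ ℕ } ∩ [d_min, d_max]`. -/
def grid (X : Finset α) (ε : ℝ) : Set ℝ :=
  {μ | (∃ j : ℕ, μ = dMin X / (1 - ε) ^ j) ∧ dMin X ≤ μ ∧ μ ≤ dMax X}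

/-- A greedy candidate on ground set `Y` with threshold `μ` and capacity `c`:
`S ⊆ Y`, `S` is `μ`-separated, `|S| ≤ c`, and if `|S| < c` then every `y ∈ Y`
satisfies `d(y,S) < μ` (i.e., has some element of `S` within distance `< μ`). -/
def GreedyCandidate (μ : ℝ) (c : ℕ) (Y S : Finset α) : Prop :=
  S ⊆ Y ∧ Separated μ S ∧ S.card ≤ c ∧
    (S.card < c → ∀ y ∈ Y, ∃ s ∈ S, dist y s < μ)

/-- `OPT`: the maximum of `div(T)` over all `k`-element subsets `T ⊆ X`. -/
noncomputable def OPTk (X : Finset α) (k : ℕ) : ℝ :=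
  sSup {r : ℝ | ∃ T ⊆ X, T.card = k ∧ divers T = r}

/-- `OPT_f`: the maximum of `div(S)` over all fair subsets `S ⊆ X`
(those with `|S ∩ X_i| = k_i` for every group `i`). -/
noncomputable def OPTf (X : Finset α) {m : ℕ} (Xg : Fin m → Finset α) (kg : Fin m → ℕ) : ℝ :=
  sSup {r : ℝ | ∃ S ⊆ X, (∀ i, (S ∩ Xg i).card = kg i) ∧ divers S = r}

/-- The chain relation on `P` with threshold `τ`: the reflexive–transitive closure of
"both points are in `P` and their distance is `< τ`". -/
def ChainRel (P : Finset α) (τ : ℝ) : α → α → Prop :=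
  Relation.ReflTransGen (fun x y => x ∈ P ∧ y ∈ P ∧ dist x y < τ)

private lemma exists_fun_of_rtg {r : α → α → Prop} {p q : α}
    (h : Relation.ReflTransGen r p q) :
    ∃ n : ℕ, ∃ f : ℕ → α, f 0 = p ∧ f n = q ∧ ∀ t < n, r (f t) (f (t+1)) := by
  induction h with
  | refl => exact ⟨0, fun _ => p, rfl, rfl, fun t ht => absurd ht (by omega)⟩
  | @tail b c h1 h2 ih =>
    obtain ⟨n, f, h0, hn, hs⟩ := ih
    refine ⟨n+1, fun t => if t ≤ n then f t else c, by simp [h0], by simp, ?_⟩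
    intro t ht
    rcases Nat.lt_or_ge t n with h | h
    · simp only [if_pos (by omega : t ≤ n), if_pos (by omega : t + 1 ≤ n)]
      exact hs t h
    · have ht' : t = n := by omega
      subst ht'
      simp only [if_pos le_rfl, if_neg (by omega : ¬ t + 1 ≤ t), hn]
      exact h2

private lemma auxdist (f : ℕ → α) (τ : ℝ) (n : ℕ)
    (hs : ∀ t < n, dist (f t) (f (t+1)) < τ) :
    ∀ d i, 1 ≤ d → i + d ≤ n → dist (f i) (f (i+d)) < d * τ := by
  intro d
  induction d with
  | zero => omega
  | succ d ihd =>
    intro i h1 h2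
    rcases Nat.eq_zero_or_pos d with h0 | hd
    · subst h0; simpa using hs i (by omega)
    · have h := ihd i hd (by omega)
      have h2' := hs (i+d) (by omega)
      have htri : dist (f i) (f (i+(d+1))) ≤ dist (f i) (f (i+d)) + dist (f (i+d)) (f (i+d+1)) := by
        rw [show i+(d+1) = i+d+1 from rfl]; exact dist_triangle _ _ _
      push_cast
      push_cast at h
      nlinarith

private lemma key_dist (P : Finset α) (m : ℕ) (hm : 1 ≤ m) (μ : ℝ) (hμ : 0 < μ)
    (A : Fin (m + 1) → Finset α)
    (hP : P = Finset.univ.biUnion A)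
    (hsep : ∀ j, Separated μ (A j)) :
    ∀ n : ℕ, ∀ f : ℕ → α,
      (∀ t < n, f t ∈ P ∧ f (t+1) ∈ P ∧ dist (f t) (f (t+1)) < μ / ((m:ℝ)+1)) →
      dist (f 0) (f n) < (m:ℝ) * (μ / ((m:ℝ)+1)) := by
  intro n
  induction n using Nat.strong_induction_on with
  | h n ih =>
  intro f hf
  set τ := μ / ((m:ℝ)+1) with hτdef
  have hm1 : (0:ℝ) < (m:ℝ)+1 := by positivity
  have hτ : 0 < τ := by positivity
  have hstep : ∀ t < n, dist (f t) (f (t+1)) < τ := fun t ht => (hf t ht).2.2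
  rcases le_or_gt n m with hn | hn
  · rcases Nat.eq_zero_or_pos n with h0 | h1
    · subst h0; simp only [dist_self]; positivity
    · have h := auxdist f τ n hstep n 0 h1 (by omega)
      simp only [Nat.zero_add] at h
      calc dist (f 0) (f n) < (n:ℝ) * τ := h
        _ ≤ (m:ℝ) * τ := by
            apply mul_le_mul_of_nonneg_right _ hτ.le
            exact_mod_cast hn
  · -- n ≥ m + 1
    have hmem : ∀ t ≤ n, f t ∈ P := by
      intro t ht
      rcases Nat.lt_or_ge t n with h | h
      · exact (hf t h).1
      · have h2 := (hf (n-1) (by omega : n - 1 < n)).2.1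
        have h3 : n - 1 + 1 = n := by omega
        rw [h3] at h2
        have ht' : t = n := by omega
        rwa [ht']
    have hcol : ∀ i : Fin (m+2), ∃ j : Fin (m+1), f i ∈ A j := by
      intro i
      have h1 : f i ∈ P := hmem i (by omega)
      rw [hP, Finset.mem_biUnion] at h1
      obtain ⟨j, _, hj⟩ := h1
      exact ⟨j, hj⟩
    choose c hc using hcol
    have hcard : Fintype.card (Fin (m+1)) < Fintype.card (Fin (m+2)) := by simp
    obtain ⟨i, i', hne, hcc⟩ := Fintype.exists_ne_map_eq_of_card_lt c hcard
    -- core argument for ordered pair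
    have core : ∀ i i' : Fin (m+2), (i:ℕ) < (i':ℕ) → c i = c i' →
        dist (f 0) (f n) < (m:ℝ) * τ := by
      intro i i' hlt hcc
      set d : ℕ := (i':ℕ) - (i:ℕ) with hd
      have hd1 : 1 ≤ d := by omega
      have hid : (i:ℕ) + d = (i':ℕ) := by omega
      have hi'n : (i':ℕ) ≤ n := by omega
      -- f i = f i'
      have hfeq : f i = f i' := by
        by_contra hne'
        have hs := hsep (c i) (f i) (hc i) (f i') (by rw [hcc]; exact hc i') hne'
        have hdlt : dist (f (i:ℕ)) (f ((i:ℕ)+d)) < (d:ℝ) * τ :=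
          auxdist f τ n hstep d i hd1 (by omega)
        rw [hid] at hdlt
        have hdle : (d:ℝ) * τ ≤ ((m:ℝ)+1) * τ := by
          apply mul_le_mul_of_nonneg_right _ hτ.le
          have : d ≤ m + 1 := by omega
          exact_mod_cast this
        have hμτ : ((m:ℝ)+1) * τ = μ := by rw [hτdef]; field_simp
        linarith
      -- splice
      set g : ℕ → α := fun t => if t ≤ (i:ℕ) then f t else f (t + d) with hg
      have hgn : n - d < n := by omega
      have hg0 : g 0 = f 0 := by simp [hg]
      have hgend : g (n - d) = f n := by
        rcases le_or_gt (n - d) (i:ℕ) with h | h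
        · have he : n - d = (i:ℕ) := by omega
          have hi'n' : (i':ℕ) = n := by omega
          simp only [hg, he, if_pos le_rfl, hfeq]
          rw [hi'n']
        · simp only [hg, if_neg (by omega : ¬ n - d ≤ (i:ℕ))]
          congr 1
          omega
      have hgs : ∀ t < n - d, g t ∈ P ∧ g (t+1) ∈ P ∧ dist (g t) (g (t+1)) < τ := by
        intro t ht
        rcases Nat.lt_or_ge t (i:ℕ) with h | h
        · simp only [hg, if_pos (by omega : t ≤ (i:ℕ)), if_pos (by omega : t + 1 ≤ (i:ℕ))]
          exact hf t (by omega)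
        rcases Nat.eq_or_lt_of_le h with h' | h'
        · simp only [hg, if_pos (by omega : t ≤ (i:ℕ)), if_neg (by omega : ¬ t + 1 ≤ (i:ℕ))]
          have h1 : t = (i:ℕ) := h'.symm
          subst h1
          rw [hfeq, show (i:ℕ) + 1 + d = (i':ℕ) + 1 by omega, ← hid]
          rw [hid]
          exact hf (i':ℕ) (by omega)
        · simp only [hg, if_neg (by omega : ¬ t ≤ (i:ℕ)), if_neg (by omega : ¬ t + 1 ≤ (i:ℕ))]
          rw [show t + 1 + d = t + d + 1 by omega]
          exact hf (t + d) (by omega)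
      have := ih (n - d) hgn g hgs
      rwa [hg0, hgend] at this
    rcases Nat.lt_or_ge (i:ℕ) (i':ℕ) with h | h
    · exact core i i' h hcc
    · have h' : (i':ℕ) < (i:ℕ) := by
        rcases Nat.lt_or_ge (i':ℕ) (i:ℕ) with h2 | h2
        · exact h2
        · exact absurd (Fin.ext (by omega)) hne
      exact core i' i h' hcc.symm

/-- The key nearest-neighbor claim in Case 1 of the proof of Lemma 4: points of `P`
lying within distance `< μ` of two far-apart points are in distinct clusters. -/
theorem stmt_8 (P : Finset α) (m : ℕ) (hm : 1 ≤ m) (μ : ℝ) (hμ : 0 < μ)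
    (A : Fin (m + 1) → Finset α)
    (hP : P = Finset.univ.biUnion A)
    (hsep : ∀ j, Separated μ (A j))
    (a b p q : α) (hp : p ∈ P) (hq : q ∈ P)
    (hap : dist a p < μ) (hbq : dist b q < μ)
    (hab : (3 * (m : ℝ) + 2) / ((m : ℝ) + 1) * μ ≤ dist a b) :
    ¬ ChainRel P (μ / ((m : ℝ) + 1)) p q := by
  intro h
  obtain ⟨n, f, h0, hn, hs⟩ := exists_fun_of_rtg h
  have hkey := key_dist P m hm μ hμ A hP hsep n f hs
  rw [h0, hn] at hkey
  have hm1 : (0:ℝ) < (m:ℝ)+1 := by positivity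
  have htri : dist a b ≤ dist a p + dist p q + dist q b := dist_triangle4 a p q b
  have hbq' : dist q b < μ := by rwa [dist_comm]
  have heq : (3 * (m : ℝ) + 2) / ((m : ℝ) + 1) * μ = μ + (m:ℝ) * (μ / ((m:ℝ)+1)) + μ := by
    field_simp
    ring
  linarith
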